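/- Let y be an involution of [n] with partial tableaux T_0 = ∅, T_1, …, T_k built by column Beissinger inserting the cycles of y in increasing order of their larger element. If 1 ≤ i < j ≤ k, p < q are both entries of T_i, and no entry r of T_j satisfies p < r < q, then p precedes q in the row reading word of T_i if and only if p precedes q in the row reading word of T_j. -/

import Mathlib

namespace GelfandRSK

/-- Schensted insertion of `x` into a single row: replace the first entry greater than `x`,
returning the new row and the bumped entry (if any). -/
def insertRow (r : List ℕ) (x : ℕ) : List ℕ × Option ℕ :=
  match r.findIdx? (fun y => decide (x < y)) with
  | none => (r ++ [x], none)
  | some i => (r.set i x, r[i]?)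

/-- Schensted row insertion of `x` into a tableau (list of rows). -/
def rsInsert : List (List ℕ) → ℕ → List (List ℕ)
  | [], x => [[x]]
  | r :: rest, x =>
    match insertRow r x with
    | (r', none) => r' :: rest
    | (r', some y) => r' :: rsInsert rest y

/-- The (0-indexed) row in which Schensted insertion of `x` adds a new box. -/
def rsBumpRow : List (List ℕ) → ℕ → ℕ
  | [], _ => 0
  | r :: rest, x =>
    match insertRow r x with
    | (_, none) => 0
    | (_, some y) => rsBumpRow rest y + 1

/-- The (0-indexed) column in which Schensted insertion of `x` adds a new box. -/
def rsBumpCol (T : List (List ℕ)) (x : ℕ) : ℕ := (T.getD (rsBumpRow T x) []).length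

/-- Add entry `k` at the end of (0-indexed) row `r`. -/
def addAtRow (T : List (List ℕ)) (r : ℕ) (k : ℕ) : List (List ℕ) :=
  if r < T.length then T.set r (T.getD r [] ++ [k]) else T ++ [[k]]

/-- Add entry `k` at the end of (0-indexed) column `c`. -/
def addAtCol (T : List (List ℕ)) (c : ℕ) (k : ℕ) : List (List ℕ) :=
  addAtRow T (T.findIdx (fun r => decide (r.length ≤ c))) k

/-- The Robinson--Schensted insertion tableau of a word. -/
def PRS (w : List ℕ) : List (List ℕ) := w.foldl rsInsert []

/-- The Robinson--Schensted pair (insertion tableau, recording tableau) of a word. -/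
def RSpair (w : List ℕ) : List (List ℕ) × List (List ℕ) :=
  w.zipIdx.foldl (fun pq ix =>
    (rsInsert pq.1 ix.1, addAtRow pq.2 (rsBumpRow pq.1 ix.1) (ix.2 + 1))) ([], [])

/-- The Robinson--Schensted recording tableau of a word. -/
def QRS (w : List ℕ) : List (List ℕ) := (RSpair w).2

/-- The row reading word: read rows left to right, starting with the last row. -/
def rowWord (T : List (List ℕ)) : List ℕ := T.reverse.flatten

/-- The shape of a tableau: the list of its row lengths. -/
def shape (T : List (List ℕ)) : List ℕ := T.map List.length

/-- Columns of the tableau are strictly increasing downwards. -/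
def colStrict (T : List (List ℕ)) : Prop :=
  ∀ i c, i + 1 < T.length → c < (T.getD (i+1) []).length →
    (T.getD i []).getD c 0 < (T.getD (i+1) []).getD c 0

/-- A partially standard tableau: semistandard, of partition shape, with
distinct positive entries (hence rows and columns strictly increasing). -/
def PartiallyStandard (T : List (List ℕ)) : Prop :=
  (∀ r ∈ T, r ≠ []) ∧
  T.Chain' (fun r₁ r₂ => r₂.length ≤ r₁.length) ∧
  (∀ r ∈ T, r.Chain' (· < ·)) ∧
  colStrict T ∧
  T.flatten.Nodup ∧
  (∀ x ∈ T.flatten, 0 < x)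

/-- A standard tableau with `n` boxes: partially standard with entries exactly `1, …, n`. -/
def IsStandardTab (n : ℕ) (T : List (List ℕ)) : Prop :=
  PartiallyStandard T ∧ T.flatten.Perm (List.range' 1 n)

/-- Row Beissinger insertion of a pair `(a, b)` with `a ≤ b`. -/
def rBS (T : List (List ℕ)) (a b : ℕ) : List (List ℕ) :=
  if a = b then addAtRow T 0 a
  else addAtRow (rsInsert T a) (rsBumpRow T a + 1) b

/-- Column Beissinger insertion of a pair `(a, b)` with `a ≤ b`. -/
def cBS (T : List (List ℕ)) (a b : ℕ) : List (List ℕ) :=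
  if a = b then addAtCol T 0 a
  else addAtCol (rsInsert T a) (rsBumpCol T a + 1) b

/-- The function on 0-based indices underlying a permutation of `Fin n`
(identity outside `[0, n)`). -/
def permFn {n : ℕ} (z : Equiv.Perm (Fin n)) : ℕ → ℕ :=
  fun i => if h : i < n then (z ⟨i, h⟩ : ℕ) else i

/-- The one-line word (with 1-based values) of a function on `[0, m)`. -/
def wordFn (w : ℕ → ℕ) (m : ℕ) : List ℕ := (List.range m).map (fun i => w i + 1)

/-- The one-line word (with 1-based values) of a permutation in `S_n`. -/
def wordOf {n : ℕ} (z : Equiv.Perm (Fin n)) : List ℕ := wordFn (permFn z) n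

/-- The 1-based action of a permutation: `act y j = y(j)` in 1-based notation. -/
def act {n : ℕ} (y : Equiv.Perm (Fin n)) (j : ℕ) : ℕ := permFn y (j - 1) + 1

/-- The 1-based pairs `(a, b)` with `a ≤ b = z(a)` of an involution,
listed in increasing order of `b`. -/
def invPairsFn (w : ℕ → ℕ) (m : ℕ) : List (ℕ × ℕ) :=
  ((List.range m).filter (fun b => decide (w b ≤ b))).map (fun b => (w b + 1, b + 1))

/-- Row Beissinger correspondence applied to an involution given as a function on `[0, m)`. -/
def PrBSfn (w : ℕ → ℕ) (m : ℕ) : List (List ℕ) :=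
  (invPairsFn w m).foldl (fun T p => rBS T p.1 p.2) []

/-- Column Beissinger correspondence applied to an involution given as a function on `[0, m)`. -/
def PcBSfn (w : ℕ → ℕ) (m : ℕ) : List (List ℕ) :=
  (invPairsFn w m).foldl (fun T p => cBS T p.1 p.2) []

/-- The row Beissinger tableau of an involution in `S_n`. -/
def PrBS {n : ℕ} (z : Equiv.Perm (Fin n)) : List (List ℕ) := PrBSfn (permFn z) n

/-- The column Beissinger tableau of an involution in `S_n`. -/
def PcBS {n : ℕ} (z : Equiv.Perm (Fin n)) : List (List ℕ) := PcBSfn (permFn z) n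

/-- The transpose of a tableau. -/
def transposeT (T : List (List ℕ)) : List (List ℕ) :=
  (List.range (T.headD []).length).map (fun c => T.filterMap (fun r => r[c]?))

/-- The length of (0-indexed) column `c`. -/
def colLen (T : List (List ℕ)) (c : ℕ) : ℕ := (T.filter (fun r => decide (c < r.length))).length

/-- The number of columns of odd length. -/
def oddColCount (T : List (List ℕ)) : ℕ :=
  ((List.range (T.headD []).length).filter (fun c => decide (colLen T c % 2 = 1))).length

/-- The number of rows of odd length. -/
def oddRowCount (T : List (List ℕ)) : ℕ :=
  (T.filter (fun r => decide (r.length % 2 = 1))).length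

/-- Apply a function to every entry of a tableau. -/
def applyEntries (f : ℕ → ℕ) (T : List (List ℕ)) : List (List ℕ) := T.map (List.map f)

/-- The transposition of values `j` and `j+1`. -/
def swapVals (j : ℕ) : ℕ → ℕ := fun x => if x = j then j + 1 else if x = j + 1 then j else x

/-- The elementary dual equivalence operator `D_i` acting on a tableau
containing the entries `i-1`, `i`, `i+1`, defined via the row reading word. -/
def Dop (i : ℕ) (T : List (List ℕ)) : List (List ℕ) :=
  let w := rowWord T
  let p : ℕ → ℕ := fun v => w.idxOf v
  if (p i < p (i+1) ∧ p (i+1) < p (i-1)) ∨ (p (i-1) < p (i+1) ∧ p (i+1) < p i) then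
    applyEntries (swapVals (i-1)) T
  else if (p i < p (i-1) ∧ p (i-1) < p (i+1)) ∨ (p (i+1) < p (i-1) ∧ p (i-1) < p i) then
    applyEntries (swapVals i) T
  else T

/-- `x` lies strictly between `u` and `v`. -/
def Btwn {α : Type*} [LT α] (x u v : α) : Prop := (u < x ∧ x < v) ∨ (v < x ∧ x < u)

/-- Exchange the entries at 0-based positions `p` and `q` of a word. -/
def swapPos (u : List ℕ) (p q : ℕ) : List ℕ := (u.set p (u.getD q 0)).set q (u.getD p 0)

/-- The Knuth move relation at 1-based position `i` on words: either the word is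
unchanged and the letters at positions `i-1, i, i+1` are monotone, or the letters at
positions `i-1, i` are exchanged (when the letter at position `i+1` is between them),
or the letters at positions `i, i+1` are exchanged (when the letter at position `i-1`
is between them). -/
def KnuthRelW (i : ℕ) (u v : List ℕ) : Prop :=
  (v = u ∧ ((u.getD (i-2) 0 < u.getD (i-1) 0 ∧ u.getD (i-1) 0 < u.getD i 0) ∨
            (u.getD i 0 < u.getD (i-1) 0 ∧ u.getD (i-1) 0 < u.getD (i-2) 0))) ∨
  (Btwn (u.getD i 0) (u.getD (i-2) 0) (u.getD (i-1) 0) ∧ v = swapPos u (i-2) (i-1)) ∨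
  (Btwn (u.getD (i-2) 0) (u.getD (i-1) 0) (u.getD i 0) ∧ v = swapPos u (i-1) i)

/-- The Knuth move relation at position `i` on permutations. -/
def KnuthRel {n : ℕ} (i : ℕ) (v w : Equiv.Perm (Fin n)) : Prop :=
  KnuthRelW i (wordOf v) (wordOf w)

/-- The dual Knuth move relation at position `i` on permutations. -/
def DualKnuthRel {n : ℕ} (i : ℕ) (v w : Equiv.Perm (Fin n)) : Prop :=
  KnuthRelW i (wordOf v⁻¹) (wordOf w⁻¹)

/-- Knuth equivalence of permutations. -/
def KnuthEquiv {n : ℕ} (v w : Equiv.Perm (Fin n)) : Prop :=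
  Relation.ReflTransGen (fun a b => ∃ i, 1 < i ∧ i < n ∧ KnuthRel i a b) v w

/-- Dual Knuth equivalence of permutations. -/
def DualKnuthEquiv {n : ℕ} (v w : Equiv.Perm (Fin n)) : Prop :=
  Relation.ReflTransGen (fun a b => ∃ i, 1 < i ∧ i < n ∧ DualKnuthRel i a b) v w

/-- The 0-based fixed points of a permutation, in increasing order. -/
def fixList {n : ℕ} (z : Equiv.Perm (Fin n)) : List ℕ :=
  ((List.finRange n).filter (fun c => decide (z c = c))).map Fin.val

/-- The ascending embedding `ι_asc` of involutions of `[n]` into fixed-point-free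
involutions of `[2n]`, as a function on 0-based indices. -/
def iotaAsc {n : ℕ} (z : Equiv.Perm (Fin n)) : ℕ → ℕ := fun i =>
  let F := fixList z
  if h : i < n then
    if z ⟨i, h⟩ = ⟨i, h⟩ then n + F.idxOf i else (z ⟨i, h⟩ : ℕ)
  else if i < n + F.length then F.getD (i - n) 0
  else if i % 2 = 0 then i + 1 else i - 1

/-- The descending embedding `ι_des` of involutions of `[n]` into fixed-point-free
involutions of `[2n]`, as a function on 0-based indices. -/
def iotaDes {n : ℕ} (z : Equiv.Perm (Fin n)) : ℕ → ℕ := fun i =>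
  let F := fixList z
  if h : i < n then
    if z ⟨i, h⟩ = ⟨i, h⟩ then n + F.length - 1 - F.idxOf i else (z ⟨i, h⟩ : ℕ)
  else if i < n + F.length then F.getD (n + F.length - 1 - i) 0
  else if i % 2 = 0 then i + 1 else i - 1

/-- The number of inversions of a function on `[0, m)`. -/
def lenFn (w : ℕ → ℕ) (m : ℕ) : ℕ :=
  ((Finset.range m ×ˢ Finset.range m).filter (fun p => p.1 < p.2 ∧ w p.2 < w p.1)).card

/-- Weak descents (0-based indices `i` with `0 ≤ i < n-1`). -/
def wDesEq (w : ℕ → ℕ) (n : ℕ) : Finset ℕ :=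
  (Finset.range (n-1)).filter (fun i => w i = i + 1 ∧ w (i+1) = i)

/-- Weak ascents. -/
def wAscEq (w : ℕ → ℕ) (n : ℕ) : Finset ℕ :=
  (Finset.range (n-1)).filter (fun i => n ≤ w i ∧ n ≤ w (i+1))

/-- Strict descents. -/
def wDesLt (w : ℕ → ℕ) (n : ℕ) : Finset ℕ :=
  ((Finset.range (n-1)).filter (fun i => w (i+1) < w i)) \ (wAscEq w n ∪ wDesEq w n)

/-- Strict ascents. -/
def wAscLt (w : ℕ → ℕ) (n : ℕ) : Finset ℕ :=
  ((Finset.range (n-1)).filter (fun i => w i < w (i+1))) \ wAscEq w n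

/-- Delete all boxes of `T` whose entry exceeds `n`. -/
def restrictT (T : List (List ℕ)) (n : ℕ) : List (List ℕ) :=
  (T.map (fun r => r.filter (fun x => decide (x ≤ n)))).filter (fun r => !r.isEmpty)

/-- The 0-based indices of the odd columns of `T`, in increasing order. -/
def oddColsList (T : List (List ℕ)) : List ℕ :=
  (List.range (T.headD []).length).filter (fun c => decide (colLen T c % 2 = 1))

/-- Given a standard tableau `T` with `n` boxes and `k` odd columns, place
`n+1, …, n+k` at the bottoms of the odd columns from left to right, then add
`n+k+1, n+k+3, …, 2n-1` to the first row and `n+k+2, n+k+4, …, 2n` to the second row. -/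
def iotaRow (n : ℕ) (T : List (List ℕ)) : List (List ℕ) :=
  let cols := oddColsList T
  let k := cols.length
  let T1 := cols.zipIdx.foldl (fun S ci => addAtCol S ci.1 (n + 1 + ci.2)) T
  let T2 := (List.range ((n - k) / 2)).foldl (fun S m => addAtRow S 0 (n + k + 1 + 2*m)) T1
  (List.range ((n - k) / 2)).foldl (fun S m => addAtRow S 1 (n + k + 2 + 2*m)) T2

/-- The number of transfer points: 0-based `i < n` with `w i ≥ n` (1-based `w(i) > n`). -/
def transferCount (w : ℕ → ℕ) (n : ℕ) : ℕ :=
  ((List.range n).filter (fun i => decide (n ≤ w i))).length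

/-- `G^asc_n`: the image of the ascending embedding. -/
def GAsc (n : ℕ) : Set (ℕ → ℕ) := {f | ∃ w : Equiv.Perm (Fin n), w * w = 1 ∧ f = iotaAsc w}

/-- `G^des_n`: the image of the descending embedding. -/
def GDes (n : ℕ) : Set (ℕ → ℕ) := {f | ∃ w : Equiv.Perm (Fin n), w * w = 1 ∧ f = iotaDes w}

/-- The value `e(j)` from the statement of Theorem on column Beissinger dual
equivalence: for 1-based `j`, `e(j) = -j` if `y(j) = j`; `e(j) = j` if
`j ≠ y(j) ∈ {i-1, i, i+1}`; and `e(j) = y(j)` otherwise. -/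
def eVal {n : ℕ} (y : Equiv.Perm (Fin n)) (i j : ℕ) : ℤ :=
  if act y j = j then -(j : ℤ)
  else if act y j ∈ ({i-1, i, i+1} : Finset ℕ) then (j : ℤ)
  else (act y j : ℤ)

/-- Schensted column insertion, via the transpose. -/
def colInsertT (T : List (List ℕ)) (x : ℕ) : List (List ℕ) :=
  transposeT (rsInsert (transposeT T) x)

/-- The (0-indexed) row in which Schensted column insertion of `x` adds a box. -/
def colBumpRow (T : List (List ℕ)) (x : ℕ) : ℕ := rsBumpCol (transposeT T) x

/-- The alternative column Beissinger insertion `T ⇐cBS (a,b)`: if `a = b`, add `a`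
at the end of the first row; if `a < b`, column insert `a` (adding a box in row `i`)
and add `b` at the end of row `i+1`. -/
def cBSalt (T : List (List ℕ)) (a b : ℕ) : List (List ℕ) :=
  if a = b then addAtRow T 0 a
  else addAtRow (colInsertT T a) (colBumpRow T a + 1) b

/-! ### Auxiliary development for `partial_tableaux_order` -/

/-- The index of the row of `T` containing `v`. -/
def rowIdx (T : List (List ℕ)) (v : ℕ) : ℕ := T.findIdx (fun r => decide (v ∈ r))

/-- Every row of `T` is strictly increasing. -/
def RowsSorted (T : List (List ℕ)) : Prop := ∀ r ∈ T, r.Chain' (· < ·)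

lemma rowIdx_cons_mem {r : List ℕ} {rest : List (List ℕ)} {v : ℕ} (h : v ∈ r) :
    rowIdx (r :: rest) v = 0 := by
  simp [rowIdx, List.findIdx_cons, h]

lemma rowIdx_cons_not_mem {r : List ℕ} {rest : List (List ℕ)} {v : ℕ} (h : v ∉ r) :
    rowIdx (r :: rest) v = rowIdx rest v + 1 := by
  simp [rowIdx, List.findIdx_cons, h]

lemma rsInsert_cons_none {r : List ℕ} {x : ℕ} (rest : List (List ℕ))
    (h : r.findIdx? (fun z => decide (x < z)) = none) :
    rsInsert (r :: rest) x = (r ++ [x]) :: rest := by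
  simp [rsInsert, insertRow, h]

lemma rsInsert_cons_some {r : List ℕ} {x i : ℕ} (rest : List (List ℕ))
    (h : r.findIdx? (fun z => decide (x < z)) = some i) (hi : i < r.length) :
    rsInsert (r :: rest) x = r.set i x :: rsInsert rest r[i] := by
  simp [rsInsert, insertRow, h, List.getElem?_eq_getElem hi]

lemma findIdx?_some_unpack {r : List ℕ} {x i : ℕ}
    (h : r.findIdx? (fun z => decide (x < z)) = some i) :
    ∃ hi : i < r.length, x < r[i] ∧ ∀ j (hj : j < i), r[j]'(Nat.lt_trans hj hi) ≤ x := by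
  rw [List.findIdx?_eq_some_iff_getElem] at h
  obtain ⟨hi, h1, h2⟩ := h
  refine ⟨hi, by simpa using h1, fun j hj => ?_⟩
  have := h2 j hj
  simpa using this

lemma findIdx?_none_unpack {r : List ℕ} {x : ℕ}
    (h : r.findIdx? (fun z => decide (x < z)) = none) :
    ∀ z ∈ r, z ≤ x := by
  rw [List.findIdx?_eq_none_iff] at h
  intro z hz
  have := h z hz
  simpa using this

lemma chain'_lt_getElem_lt {r : List ℕ} (hr : r.Chain' (· < ·)) {i j : ℕ} (hj : j < r.length)
    (hij : i < j) : r[i]'(Nat.lt_trans hij hj) < r[j] := by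
  change List.IsChain _ r at hr
  rw [List.isChain_iff_pairwise] at hr
  exact List.pairwise_iff_getElem.mp hr i j _ hj hij

lemma nodup_of_chain'_lt {r : List ℕ} (hr : r.Chain' (· < ·)) : r.Nodup := by
  change List.IsChain _ r at hr
  rw [List.isChain_iff_pairwise] at hr
  exact hr.imp (fun h => ne_of_lt h)

lemma indexOf_lt_of_sorted {r : List ℕ} (hr : r.Chain' (· < ·)) {p q : ℕ}
    (hp : p ∈ r) (hq : q ∈ r) (hpq : p < q) : r.idxOf p < r.idxOf q := by
  by_contra hle
  push_neg at hle
  have hpl := List.idxOf_lt_length_iff.mpr hp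
  have hql := List.idxOf_lt_length_iff.mpr hq
  have hp' : r[r.idxOf p]'hpl = p := List.getElem_idxOf _
  have hq' : r[r.idxOf q]'hql = q := List.getElem_idxOf _
  rcases Nat.lt_or_ge (r.idxOf q) (r.idxOf p) with h | h
  · have := chain'_lt_getElem_lt hr hpl h
    rw [hp', hq'] at this
    omega
  · have heq : r.idxOf q = r.idxOf p := le_antisymm hle h
    have : p = q := by
      rw [← hp', ← hq']
      simp only [heq]
    omega

lemma flatten_rsInsert (T : List (List ℕ)) (x : ℕ) :
    (rsInsert T x).flatten.Perm (x :: T.flatten) := by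
  induction T generalizing x with
  | nil => simp [rsInsert]
  | cons r rest ih =>
    rcases hfind : r.findIdx? (fun z => decide (x < z)) with _ | i
    · rw [rsInsert_cons_none rest hfind]
      simp only [List.flatten_cons]
      exact (List.perm_append_singleton x r).append_right _
    · obtain ⟨hi, -, -⟩ := findIdx?_some_unpack hfind
      rw [rsInsert_cons_some rest hfind hi]
      simp only [List.flatten_cons]
      have hset : r.set i x = r.take i ++ x :: r.drop (i+1) := by
        rw [List.set_eq_take_append_cons_drop]; simp [hi]
      have hrdec : r.take i ++ r[i] :: r.drop (i+1) = r := by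
        rw [List.getElem_cons_drop, List.take_append_drop]
      refine (List.Perm.append_left _ (ih _)).trans ?_
      rw [hset]
      conv_rhs => rw [← hrdec]
      refine (List.Perm.append_right _ List.perm_middle).trans ?_
      refine List.Perm.cons x ?_
      show ((r.take i ++ r.drop (i+1)) ++ (r[i] :: rest.flatten)).Perm
        ((r.take i ++ r[i] :: r.drop (i+1)) ++ rest.flatten)
      rw [List.append_assoc, List.append_assoc]
      exact List.Perm.append_left _ List.perm_middle
lemma mem_set_of_mem {l : List ℕ} {i v x : ℕ} (hi : i < l.length)
    (hv : v ∈ l) (hne : v ≠ l[i]) : v ∈ l.set i x := by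
  obtain ⟨j, hj, hje⟩ := List.mem_iff_getElem.mp hv
  have hji : i ≠ j := by rintro rfl; exact hne hje.symm
  rw [List.mem_iff_getElem]
  refine ⟨j, by simpa using hj, ?_⟩
  rw [List.getElem_set_ne hji]
  exact hje

lemma not_mem_set_self {l : List ℕ} {i x : ℕ} (hi : i < l.length) (hnd : l.Nodup)
    (hx : l[i] ≠ x) : l[i] ∉ l.set i x := by
  intro hmem
  obtain ⟨j, hj, hje⟩ := List.mem_iff_getElem.mp hmem
  rw [List.length_set] at hj
  by_cases hji : i = j
  · subst hji
    rw [List.getElem_set_self] at hje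
    exact hx hje.symm
  · rw [List.getElem_set_ne hji] at hje
    exact hji ((List.Nodup.getElem_inj_iff hnd).mp hje.symm)

lemma rowsSorted_rsInsert {T : List (List ℕ)} {x : ℕ}
    (hs : RowsSorted T) (hnd : T.flatten.Nodup) (hx : x ∉ T.flatten) :
    RowsSorted (rsInsert T x) := by
  induction T generalizing x with
  | nil =>
    intro s hsmem
    simp only [rsInsert, List.mem_singleton] at hsmem
    subst hsmem
    exact List.isChain_singleton x
  | cons r rest ih =>
    have hrs : r.Chain' (· < ·) := hs r List.mem_cons_self
    have hnd' : (r ++ rest.flatten).Nodup := by simpa using hnd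
    obtain ⟨hndr, hndrest, hdisj⟩ := List.nodup_append'.mp hnd'
    have hxr : x ∉ r := fun h => hx (by simp [h])
    have hxrest : x ∉ rest.flatten := fun h => hx (by simp [h])
    rcases hfind : r.findIdx? (fun z => decide (x < z)) with _ | i
    · rw [rsInsert_cons_none rest hfind]
      intro s hsmem
      rcases List.mem_cons.mp hsmem with rfl | hs'
      · have hall := findIdx?_none_unpack hfind
        refine List.IsChain.append hrs (List.isChain_singleton x) ?_
        intro z hz y' hy'
        have hzr : z ∈ r := List.mem_of_mem_getLast? hz
        have hy'x : x = y' := by simpa using hy'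
        subst hy'x
        have := hall z hzr
        have : z ≠ x := fun h => hxr (h ▸ hzr)
        omega
      · exact hs _ (List.mem_cons_of_mem _ hs')
    · obtain ⟨hi, hxi, hbef⟩ := findIdx?_some_unpack hfind
      rw [rsInsert_cons_some rest hfind hi]
      intro s hsmem
      rcases List.mem_cons.mp hsmem with rfl | hs'
      · change List.IsChain _ _
        rw [List.isChain_iff_pairwise, List.pairwise_iff_getElem]
        intro a b ha hb hab
        rw [List.length_set] at ha hb
        by_cases hbi : i = b
        · subst hbi
          rw [List.getElem_set_self (by simpa using hb)]
          have hai : i ≠ a := by omega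
          rw [List.getElem_set_ne hai]
          have h1 := hbef a hab
          have h2 : r[a] ≠ x := fun h => hxr (h ▸ List.getElem_mem ha)
          omega
        · rw [List.getElem_set_ne hbi]
          by_cases hai : i = a
          · subst hai
            rw [List.getElem_set_self (by simpa using ha)]
            have : r[i] < r[b] := chain'_lt_getElem_lt hrs hb hab
            omega
          · rw [List.getElem_set_ne hai]
            exact chain'_lt_getElem_lt hrs hb hab
      · have hyrest : r[i] ∉ rest.flatten := hdisj (List.getElem_mem hi)
        exact ih (fun s' hs'' => hs _ (List.mem_cons_of_mem _ hs'')) hndrest hyrest _ hs'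

lemma rowIdx_rsInsert_self (S : List (List ℕ)) (v : ℕ) : rowIdx (rsInsert S v) v = 0 := by
  cases S with
  | nil => exact rowIdx_cons_mem (by simp)
  | cons r rest =>
    rcases hfind : r.findIdx? (fun z => decide (v < z)) with _ | i
    · rw [rsInsert_cons_none rest hfind]
      exact rowIdx_cons_mem (by simp)
    · obtain ⟨hi, -, -⟩ := findIdx?_some_unpack hfind
      rw [rsInsert_cons_some rest hfind hi]
      refine rowIdx_cons_mem ?_
      rw [List.mem_iff_getElem]
      exact ⟨i, by simpa using hi, by simp⟩

/-- If `q ∈ r` is a row containing a value `> v` being inserted, and no entry lies strictly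
between `v` and `q`, then the bumped entry is `q` itself. -/
lemma bumped_eq_of_mem {r : List ℕ} {v q i : ℕ} (hrs : r.Chain' (· < ·))
    (hfind : r.findIdx? (fun z => decide (v < z)) = some i)
    (hi : i < r.length)
    (hqr : q ∈ r) (hvq : v < q)
    (hbet : ∀ z ∈ r, ¬ (v < z ∧ z < q)) : r[i] = q := by
  obtain ⟨hi2, hvi, hbef⟩ := findIdx?_some_unpack hfind
  obtain ⟨j, hj, hje⟩ := List.mem_iff_getElem.mp hqr
  have hij : i ≤ j := by
    by_contra h
    push_neg at h
    have := hbef j h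
    omega
  have hle : r[i] ≤ q := by
    rcases Nat.eq_or_lt_of_le hij with heq | hlt
    · subst heq
      exact le_of_eq hje
    · have h2 := chain'_lt_getElem_lt hrs hj hlt
      exact le_of_lt (hje ▸ h2)
  have := hbet r[i] (List.getElem_mem hi)
  omega

/-- Lemma C: after inserting `v`, a value `q > v` with nothing strictly in between
sits strictly below the first row. -/
lemma one_le_rowIdx_rsInsert {S : List (List ℕ)} {v q : ℕ}
    (hs : RowsSorted S) (hnd : S.flatten.Nodup) (hv : v ∉ S.flatten)
    (hq : q ∈ S.flatten) (hvq : v < q)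
    (hbet : ∀ z ∈ S.flatten, ¬ (v < z ∧ z < q)) :
    1 ≤ rowIdx (rsInsert S v) q := by
  cases S with
  | nil => simp at hq
  | cons r rest =>
    have hrs : r.Chain' (· < ·) := hs r List.mem_cons_self
    have hnd' : (r ++ rest.flatten).Nodup := by simpa using hnd
    obtain ⟨hndr, hndrest, hdisj⟩ := List.nodup_append'.mp hnd'
    have hqv : q ≠ v := by rintro rfl; exact hv hq
    rcases hfind : r.findIdx? (fun z => decide (v < z)) with _ | i
    · have hall := findIdx?_none_unpack hfind
      have hqr : q ∉ r := fun h => absurd (hall q h) (by omega)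
      rw [rsInsert_cons_none rest hfind]
      rw [rowIdx_cons_not_mem (by simp [hqr, hqv] : q ∉ r ++ [v])]
      omega
    · obtain ⟨hi, hvi, hbef⟩ := findIdx?_some_unpack hfind
      rw [rsInsert_cons_some rest hfind hi]
      have hqset : q ∉ r.set i v := by
        intro hmem
        rcases List.mem_or_eq_of_mem_set hmem with hqr | rfl
        · have hriq : r[i] = q :=
            bumped_eq_of_mem hrs hfind hi hqr hvq (fun z hz => hbet z (by simp [hz]))
          exact not_mem_set_self hi hndr (by omega) (hriq ▸ hmem)
        · exact hqv rfl
      rw [rowIdx_cons_not_mem hqset]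
      omega
/-- Lemma B: row insertion of a value not strictly between `p < q` (with no entry strictly
between them) preserves the relative order of the rows containing `p` and `q`. -/
lemma rowIdx_le_iff_rsInsert {p q : ℕ} (S : List (List ℕ)) :
    ∀ v : ℕ, RowsSorted S → S.flatten.Nodup → v ∉ S.flatten →
    p ∈ S.flatten → q ∈ S.flatten → p < q →
    (∀ z ∈ v :: S.flatten, ¬ (p < z ∧ z < q)) →
    (rowIdx (rsInsert S v) q ≤ rowIdx (rsInsert S v) p ↔ rowIdx S q ≤ rowIdx S p) := by
  induction S with
  | nil =>
    intro v _ _ _ hp _ _ _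
    simp at hp
  | cons r rest ih =>
    intro v hs hnd hv hp hq hpq hbet
    have hrs : r.Chain' (· < ·) := hs r List.mem_cons_self
    have hnd' : (r ++ rest.flatten).Nodup := by simpa using hnd
    obtain ⟨hndr, hndrest, hdisj⟩ := List.nodup_append'.mp hnd'
    have hvr : v ∉ r := fun h => hv (by simp [h])
    have hvrest : v ∉ rest.flatten := fun h => hv (by simp [h])
    have hpv : p ≠ v := by rintro rfl; exact hv hp
    have hqv : q ≠ v := by rintro rfl; exact hv hq
    have hsrest : RowsSorted rest := fun s hs' => hs _ (List.mem_cons_of_mem _ hs')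
    have hpmem : p ∈ r ∨ p ∈ rest.flatten := List.mem_append.mp (by simpa using hp)
    have hqmem : q ∈ r ∨ q ∈ rest.flatten := List.mem_append.mp (by simpa using hq)
    rcases hfind : r.findIdx? (fun z => decide (v < z)) with _ | i
    · -- appended at the end of the first row: row indices unchanged
      rw [rsInsert_cons_none rest hfind]
      have key : ∀ z, z ≠ v → rowIdx ((r ++ [v]) :: rest) z = rowIdx (r :: rest) z := by
        intro z hz
        by_cases hzr : z ∈ r
        · rw [rowIdx_cons_mem (by simp [hzr]), rowIdx_cons_mem hzr]
        · rw [rowIdx_cons_not_mem (by simp [hzr, hz]), rowIdx_cons_not_mem hzr]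
      rw [key p hpv, key q hqv]
    · obtain ⟨hi, hvi, hbef⟩ := findIdx?_some_unpack hfind
      rw [rsInsert_cons_some rest hfind hi]
      by_cases hyp : r[i] = p
      · -- the bumped entry is `p`
        have hpr : p ∈ r := hyp ▸ List.getElem_mem hi
        have hpnotrest : p ∉ rest.flatten := hdisj hpr
        have hpset : p ∉ r.set i v := by
          rw [← hyp]
          exact not_mem_set_self hi hndr (by omega)
        rcases hqmem with hqr | hqrest
        · have hqset : q ∈ r.set i v := mem_set_of_mem hi hqr (by rw [hyp]; omega)
          rw [rowIdx_cons_mem hqset, rowIdx_cons_mem hqr]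
          simp
        · have hqnr : q ∉ r := fun h => (hdisj h) hqrest
          have hqset : q ∉ r.set i v := fun h =>
            Or.elim (List.mem_or_eq_of_mem_set h) hqnr hqv
          have hC : 1 ≤ rowIdx (rsInsert rest p) q :=
            one_le_rowIdx_rsInsert hsrest hndrest hpnotrest hqrest hpq
              (fun z hz => hbet z (by simp [hz]))
          rw [hyp, rowIdx_cons_not_mem hqset, rowIdx_cons_not_mem hpset,
            rowIdx_cons_not_mem hqnr, rowIdx_cons_mem hpr, rowIdx_rsInsert_self]
          omega
      · by_cases hyq : r[i] = q
        · -- the bumped entry is `q`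
          have hvq : v < q := by omega
          have hvp : v < p := by
            have := hbet v (by simp)
            have := hpv
            omega
          have hqr : q ∈ r := hyq ▸ List.getElem_mem hi
          have hpnr : p ∉ r := by
            intro hpr2
            obtain ⟨j, hj, hje⟩ := List.mem_iff_getElem.mp hpr2
            have hij : i ≤ j := by
              by_contra h
              push_neg at h
              have := hbef j h
              omega
            rcases Nat.eq_or_lt_of_le hij with heq | hlt
            · subst heq
              rw [hyq] at hje
              omega
            · have h2 := chain'_lt_getElem_lt hrs hj hlt
              rw [hyq, hje] at h2
              omega
          have hqset : q ∉ r.set i v := by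
            rw [← hyq]
            exact not_mem_set_self hi hndr (by omega)
          have hpset : p ∉ r.set i v := fun h =>
            Or.elim (List.mem_or_eq_of_mem_set h) hpnr hpv
          rw [hyq, rowIdx_cons_not_mem hqset, rowIdx_cons_not_mem hpset,
            rowIdx_cons_mem hqr, rowIdx_rsInsert_self]
          omega
        · -- the bumped entry is neither `p` nor `q`
          have hyrest : r[i] ∉ rest.flatten := hdisj (List.getElem_mem hi)
          have hmemset : ∀ z, z ≠ v → z ≠ r[i] → (z ∈ r.set i v ↔ z ∈ r) := by
            intro z hz1 hz2
            constructor
            · intro h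
              exact Or.elim (List.mem_or_eq_of_mem_set h) id (fun h' => absurd h' hz1)
            · intro h
              exact mem_set_of_mem hi h hz2
          have hyp' : p ≠ r[i] := fun h => hyp h.symm
          have hyq' : q ≠ r[i] := fun h => hyq h.symm
          rcases hpmem with hpr | hprest <;> rcases hqmem with hqr | hqrest
          · rw [rowIdx_cons_mem ((hmemset p hpv hyp').mpr hpr),
              rowIdx_cons_mem ((hmemset q hqv hyq').mpr hqr),
              rowIdx_cons_mem hpr, rowIdx_cons_mem hqr]
          · have hqnr : q ∉ r := fun h => (hdisj h) hqrest
            have hqset : q ∉ r.set i v := fun h => hqnr ((hmemset q hqv hyq').mp h)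
            rw [rowIdx_cons_mem ((hmemset p hpv hyp').mpr hpr),
              rowIdx_cons_not_mem hqset, rowIdx_cons_mem hpr, rowIdx_cons_not_mem hqnr]
            omega
          · have hpnr : p ∉ r := fun h => (hdisj h) hprest
            have hpset : p ∉ r.set i v := fun h => hpnr ((hmemset p hpv hyp').mp h)
            rw [rowIdx_cons_mem ((hmemset q hqv hyq').mpr hqr),
              rowIdx_cons_not_mem hpset, rowIdx_cons_mem hqr, rowIdx_cons_not_mem hpnr]
            omega
          · have hpnr : p ∉ r := fun h => (hdisj h) hprest
            have hqnr : q ∉ r := fun h => (hdisj h) hqrest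
            have hpset : p ∉ r.set i v := fun h => hpnr ((hmemset p hpv hyp').mp h)
            have hqset : q ∉ r.set i v := fun h => hqnr ((hmemset q hqv hyq').mp h)
            have hIH := ih r[i] hsrest hndrest hyrest hprest hqrest hpq
              (fun z hz => hbet z (by
                rcases List.mem_cons.mp hz with rfl | hz'
                · simp [List.getElem_mem hi]
                · simp [hz']))
            rw [rowIdx_cons_not_mem hqset, rowIdx_cons_not_mem hpset,
              rowIdx_cons_not_mem hqnr, rowIdx_cons_not_mem hpnr]
            omega
lemma addAtRow_cons_succ (h : List ℕ) (t : List (List ℕ)) (r k : ℕ) :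
    addAtRow (h :: t) (r+1) k = h :: addAtRow t r k := by
  simp only [addAtRow, List.length_cons]
  by_cases hr : r < t.length
  · rw [if_pos (by omega), if_pos hr]
    simp [List.getD]
  · rw [if_neg (by omega), if_neg hr]
    rfl

lemma addAtRow_cons_zero (h : List ℕ) (t : List (List ℕ)) (k : ℕ) :
    addAtRow (h :: t) 0 k = (h ++ [k]) :: t := by
  simp [addAtRow, List.getD]

lemma rowIdx_addAtRow {T : List (List ℕ)} {k v : ℕ} (hvk : v ≠ k)
    (hv : v ∈ T.flatten) (r : ℕ) : rowIdx (addAtRow T r k) v = rowIdx T v := by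
  induction T generalizing r with
  | nil => simp at hv
  | cons h t ih =>
    have hvmem : v ∈ h ∨ v ∈ t.flatten := List.mem_append.mp (by simpa using hv)
    cases r with
    | zero =>
      rw [addAtRow_cons_zero]
      by_cases hvh : v ∈ h
      · rw [rowIdx_cons_mem (by simp [hvh]), rowIdx_cons_mem hvh]
      · rw [rowIdx_cons_not_mem (by simp [hvh, hvk]), rowIdx_cons_not_mem hvh]
    | succ r =>
      rw [addAtRow_cons_succ]
      by_cases hvh : v ∈ h
      · rw [rowIdx_cons_mem hvh, rowIdx_cons_mem hvh]
      · rw [rowIdx_cons_not_mem hvh, rowIdx_cons_not_mem hvh,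
          ih (hvmem.resolve_left hvh) r]

lemma flatten_addAtRow (T : List (List ℕ)) (r k : ℕ) :
    (addAtRow T r k).flatten.Perm (T.flatten ++ [k]) := by
  induction T generalizing r with
  | nil =>
    simp [addAtRow]
  | cons h t ih =>
    cases r with
    | zero =>
      rw [addAtRow_cons_zero]
      simp only [List.flatten_cons]
      rw [List.append_assoc, List.append_assoc]
      exact List.Perm.append_left h (List.perm_append_comm)
    | succ r =>
      rw [addAtRow_cons_succ]
      simp only [List.flatten_cons]
      rw [List.append_assoc]
      exact List.Perm.append_left h (ih r)

lemma rowsSorted_addAtRow {T : List (List ℕ)} {k : ℕ} (hs : RowsSorted T)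
    (hk : ∀ z ∈ T.flatten, z < k) (r : ℕ) : RowsSorted (addAtRow T r k) := by
  induction T generalizing r with
  | nil =>
    intro s hsmem
    have hnil : addAtRow [] r k = [[k]] := by simp [addAtRow]
    rw [hnil] at hsmem
    have hs' : s = [k] := by simpa using hsmem
    subst hs'
    exact List.isChain_singleton k
  | cons h t ih =>
    cases r with
    | zero =>
      rw [addAtRow_cons_zero]
      intro s hsmem
      rcases List.mem_cons.mp hsmem with rfl | hs'
      · refine List.IsChain.append (hs h List.mem_cons_self) (List.isChain_singleton k) ?_
        intro z hz y' hy'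
        have hzh : z ∈ h := List.mem_of_mem_getLast? hz
        have hy'k : k = y' := by simpa using hy'
        subst hy'k
        exact hk z (by simp [hzh])
      · exact hs _ (List.mem_cons_of_mem _ hs')
    | succ r =>
      rw [addAtRow_cons_succ]
      intro s hsmem
      rcases List.mem_cons.mp hsmem with rfl | hs'
      · exact hs _ List.mem_cons_self
      · exact ih (fun s' h' => hs _ (List.mem_cons_of_mem _ h'))
          (fun z hz => hk z (by simp [hz])) r _ hs'

lemma mem_rowWord {T : List (List ℕ)} {v : ℕ} : v ∈ rowWord T ↔ v ∈ T.flatten := by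
  simp [rowWord, List.mem_flatten, List.mem_reverse]

/-- Lemma A: `p` precedes `q` in the row reading word iff the row of `q` is weakly above
the row of `p`. -/
lemma indexOf_rowWord_lt_iff {p q : ℕ} (T : List (List ℕ)) :
    RowsSorted T → T.flatten.Nodup → p ∈ T.flatten → q ∈ T.flatten → p < q →
    ((rowWord T).idxOf p < (rowWord T).idxOf q ↔ rowIdx T q ≤ rowIdx T p) := by
  induction T with
  | nil => intro _ _ hp; simp at hp
  | cons r rest ih =>
    intro hs hnd hp hq hpq
    obtain ⟨hndr, hndrest, hdisj⟩ := List.nodup_append'.mp (by simpa using hnd)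
    have hrs : r.Chain' (· < ·) := hs r List.mem_cons_self
    have hsrest : RowsSorted rest := fun s h => hs _ (List.mem_cons_of_mem _ h)
    have hpmem : p ∈ r ∨ p ∈ rest.flatten := List.mem_append.mp (by simpa using hp)
    have hqmem : q ∈ r ∨ q ∈ rest.flatten := List.mem_append.mp (by simpa using hq)
    have hW : rowWord (r :: rest) = rowWord rest ++ r := by
      simp [rowWord]
    rw [hW]
    rcases hpmem with hpr | hprest <;> rcases hqmem with hqr | hqrest
    · have hpW : p ∉ rowWord rest := fun h => hdisj hpr (mem_rowWord.mp h)
      have hqW : q ∉ rowWord rest := fun h => hdisj hqr (mem_rowWord.mp h)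
      rw [List.idxOf_append_of_notMem hpW, List.idxOf_append_of_notMem hqW,
        rowIdx_cons_mem hpr, rowIdx_cons_mem hqr]
      have := indexOf_lt_of_sorted hrs hpr hqr hpq
      omega
    · have hqnr : q ∉ r := fun h => hdisj h hqrest
      have hpW : p ∉ rowWord rest := fun h => hdisj hpr (mem_rowWord.mp h)
      have hqW : q ∈ rowWord rest := mem_rowWord.mpr hqrest
      rw [List.idxOf_append_of_notMem hpW, List.idxOf_append_of_mem hqW,
        rowIdx_cons_mem hpr, rowIdx_cons_not_mem hqnr]
      have hql : (rowWord rest).idxOf q < (rowWord rest).length :=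
        List.idxOf_lt_length_iff.mpr hqW
      omega
    · have hpnr : p ∉ r := fun h => hdisj h hprest
      have hpW : p ∈ rowWord rest := mem_rowWord.mpr hprest
      have hqW : q ∉ rowWord rest := fun h => hdisj hqr (mem_rowWord.mp h)
      rw [List.idxOf_append_of_mem hpW, List.idxOf_append_of_notMem hqW,
        rowIdx_cons_mem hqr, rowIdx_cons_not_mem hpnr]
      have hpl : (rowWord rest).idxOf p < (rowWord rest).length :=
        List.idxOf_lt_length_iff.mpr hpW
      omega
    · have hpnr : p ∉ r := fun h => hdisj h hprest
      have hqnr : q ∉ r := fun h => hdisj h hqrest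
      rw [List.idxOf_append_of_mem (mem_rowWord.mpr hprest),
        List.idxOf_append_of_mem (mem_rowWord.mpr hqrest),
        rowIdx_cons_not_mem hqnr, rowIdx_cons_not_mem hpnr]
      have := ih hsrest hndrest hprest hqrest hpq
      omega

lemma flatten_cBS (T : List (List ℕ)) (a b : ℕ) :
    (cBS T a b).flatten.Perm (T.flatten ++ (if a = b then [a] else [a, b])) := by
  unfold cBS addAtCol
  by_cases h : a = b
  · rw [if_pos h, if_pos h]
    exact flatten_addAtRow T _ a
  · rw [if_neg h, if_neg h]
    refine (flatten_addAtRow _ _ b).trans ?_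
    refine (List.Perm.append_right [b] (flatten_rsInsert T a)).trans ?_
    exact List.perm_middle.symm

lemma rowsSorted_cBS {T : List (List ℕ)} {a b : ℕ} (hs : RowsSorted T)
    (hnd : T.flatten.Nodup) (ha : a ∉ T.flatten) (hb : ∀ z ∈ T.flatten, z < b)
    (hab : a ≤ b) : RowsSorted (cBS T a b) := by
  unfold cBS addAtCol
  by_cases h : a = b
  · rw [if_pos h]
    exact rowsSorted_addAtRow hs (fun z hz => h ▸ hb z hz) _
  · rw [if_neg h]
    refine rowsSorted_addAtRow (rowsSorted_rsInsert hs hnd ha) ?_ _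
    intro z hz
    rcases List.mem_cons.mp ((flatten_rsInsert T a).mem_iff.mp hz) with rfl | hz'
    · omega
    · exact hb z hz'

lemma rowIdx_le_iff_cBS {T : List (List ℕ)} {a b p q : ℕ}
    (hs : RowsSorted T) (hnd : T.flatten.Nodup) (ha : a ∉ T.flatten)
    (hb : ∀ z ∈ T.flatten, z < b)
    (hp : p ∈ T.flatten) (hq : q ∈ T.flatten) (hpq : p < q)
    (hbet : ∀ z ∈ a :: T.flatten, ¬ (p < z ∧ z < q)) :
    (rowIdx (cBS T a b) q ≤ rowIdx (cBS T a b) p ↔ rowIdx T q ≤ rowIdx T p) := by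
  unfold cBS addAtCol
  by_cases h : a = b
  · rw [if_pos h]
    have hpa : p ≠ a := by have := hb p hp; omega
    have hqa : q ≠ a := by have := hb q hq; omega
    rw [rowIdx_addAtRow hpa hp _, rowIdx_addAtRow hqa hq _]
  · rw [if_neg h]
    have hpb : p ≠ b := by have := hb p hp; omega
    have hqb : q ≠ b := by have := hb q hq; omega
    have hp' : p ∈ (rsInsert T a).flatten :=
      (flatten_rsInsert T a).mem_iff.mpr (by simp [hp])
    have hq' : q ∈ (rsInsert T a).flatten :=
      (flatten_rsInsert T a).mem_iff.mpr (by simp [hq])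
    rw [rowIdx_addAtRow hpb hp' _, rowIdx_addAtRow hqb hq' _]
    exact rowIdx_le_iff_rsInsert T a hs hnd ha hp hq hpq hbet
/-- The values contributed to the tableau by one `cBS` step with pair `c`. -/
def pairVals (c : ℕ × ℕ) : List ℕ := if c.1 = c.2 then [c.1] else [c.1, c.2]

lemma mem_pairVals {c : ℕ × ℕ} {z : ℕ} (h : z ∈ pairVals c) : z = c.1 ∨ z = c.2 := by
  unfold pairVals at h
  split at h <;> simp_all

lemma fst_mem_pairVals (c : ℕ × ℕ) : c.1 ∈ pairVals c := by
  unfold pairVals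
  split <;> simp

lemma permFn_lt {n : ℕ} (y : Equiv.Perm (Fin n)) {i : ℕ} (h : i < n) : permFn y i < n := by
  simp only [permFn, dif_pos h]
  exact (y ⟨i, h⟩).isLt

lemma permFn_permFn {n : ℕ} (y : Equiv.Perm (Fin n)) (hy : y * y = 1) {i : ℕ} (h : i < n) :
    permFn y (permFn y i) = i := by
  have hyy : ∀ x : Fin n, y (y x) = x := by
    intro x
    have h1 : (y * y) x = (1 : Equiv.Perm (Fin n)) x := by rw [hy]
    simpa [Equiv.Perm.mul_apply] using h1
  simp only [permFn, dif_pos h]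
  have h2 : ((y ⟨i, h⟩ : Fin n) : ℕ) < n := (y ⟨i, h⟩).isLt
  rw [dif_pos h2]
  have h3 : (⟨((y ⟨i, h⟩ : Fin n) : ℕ), h2⟩ : Fin n) = y ⟨i, h⟩ := rfl
  rw [h3, hyy]

lemma invPairs_mem {w : ℕ → ℕ} {n : ℕ} {c : ℕ × ℕ} (hc : c ∈ invPairsFn w n) :
    ∃ b, b < n ∧ w b ≤ b ∧ c = (w b + 1, b + 1) := by
  rw [invPairsFn, List.mem_map] at hc
  obtain ⟨b, hb, rfl⟩ := hc
  rw [List.mem_filter, List.mem_range] at hb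
  exact ⟨b, hb.1, by simpa using hb.2, rfl⟩

lemma invPairs_snd_sorted (w : ℕ → ℕ) (n : ℕ) :
    (invPairsFn w n).Pairwise (fun c c' => c.2 < c'.2) := by
  rw [invPairsFn, List.pairwise_map]
  refine List.Pairwise.filter _ ?_
  refine ((List.pairwise_lt_range (n := n))).imp ?_
  intro a b hab
  simpa using hab

lemma invPairs_le {w : ℕ → ℕ} {n : ℕ} {c : ℕ × ℕ} (hc : c ∈ invPairsFn w n) : c.1 ≤ c.2 := by
  obtain ⟨b, hb, hwb, rfl⟩ := invPairs_mem hc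
  simpa using hwb

lemma invPairs_vals_nodup {n : ℕ} (y : Equiv.Perm (Fin n)) (hy : y * y = 1) :
    ((invPairsFn (permFn y) n).flatMap pairVals).Nodup := by
  set w := permFn y with hw
  rw [invPairsFn, List.flatMap_map]
  rw [List.nodup_flatMap]
  constructor
  · intro b hb
    unfold pairVals
    split <;> simp_all
  · have hpw : ((List.range n).filter (fun b => decide (w b ≤ b))).Pairwise (· < ·) :=
      List.Pairwise.filter _ ((List.pairwise_lt_range (n := n)))
    refine hpw.imp_of_mem ?_
    intro a b ha hb hab
    rw [List.mem_filter, List.mem_range] at ha hb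
    obtain ⟨han, hwa⟩ := ha
    obtain ⟨hbn, hwb⟩ := hb
    have hwa' : w a ≤ a := by simpa using hwa
    have hwb' : w b ≤ b := by simpa using hwb
    intro z hz1 hz2
    have h1 := mem_pairVals hz1
    have h2 := mem_pairVals hz2
    simp only at h1 h2
    have hwwa : w (w a) = a := permFn_permFn y hy han
    have hwwb : w (w b) = b := permFn_permFn y hy hbn
    rcases h1 with h1 | h1 <;> rcases h2 with h2 | h2
    · -- w a + 1 = w b + 1
      have : w a = w b := by omega
      have : w (w a) = w (w b) := by rw [this]
      omega
    · -- w a + 1 = b + 1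
      omega
    · -- a + 1 = w b + 1
      have h3 : a = w b := by omega
      have h4 : w a = b := by rw [h3, hwwb]
      omega
    · omega

lemma fold_step (L : List (ℕ × ℕ)) (m : ℕ) (hm : m < L.length) :
    (L.take (m+1)).foldl (fun T c => cBS T c.1 c.2) ([] : List (List ℕ)) =
    cBS ((L.take m).foldl (fun T c => cBS T c.1 c.2) []) (L[m]).1 (L[m]).2 := by
  rw [List.take_succ, List.getElem?_eq_getElem hm, List.foldl_append]
  rfl

lemma flatMap_take_succ (L : List (ℕ × ℕ)) (m : ℕ) (hm : m < L.length) :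
    (L.take (m+1)).flatMap pairVals = (L.take m).flatMap pairVals ++ pairVals L[m] := by
  rw [List.take_succ, List.getElem?_eq_getElem hm, List.flatMap_append]
  simp [pairVals]

lemma flatMap_take_nodup {L : List (ℕ × ℕ)} (hglobal : (L.flatMap pairVals).Nodup) (m : ℕ) :
    ((L.take m).flatMap pairVals).Nodup := by
  have hsplit : L.flatMap pairVals =
      (L.take m).flatMap pairVals ++ (L.drop m).flatMap pairVals := by
    rw [← List.flatMap_append, List.take_append_drop]
  rw [hsplit] at hglobal
  exact (List.nodup_append'.mp hglobal).1

lemma flatMap_take_mono {L : List (ℕ × ℕ)} {m m' : ℕ} (h : m ≤ m') {z : ℕ}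
    (hz : z ∈ (L.take m).flatMap pairVals) : z ∈ (L.take m').flatMap pairVals := by
  rw [List.mem_flatMap] at hz ⊢
  obtain ⟨c, hc, hzc⟩ := hz
  exact ⟨c, (List.take_prefix_take_left (l := L) h).subset hc, hzc⟩

lemma fold_pre {L : List (ℕ × ℕ)} (hglobal : (L.flatMap pairVals).Nodup)
    (hsorted : L.Pairwise (fun c c' => c.2 < c'.2))
    (hle : ∀ c ∈ L, c.1 ≤ c.2) {m : ℕ} (hm : m < L.length) :
    ((L[m]).1 ∉ (L.take m).flatMap pairVals) ∧
    (∀ z ∈ (L.take m).flatMap pairVals, z < (L[m]).2) := by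
  constructor
  · intro hmem
    have hsplit : L.flatMap pairVals =
        (L.take m).flatMap pairVals ++ (L.drop m).flatMap pairVals := by
      rw [← List.flatMap_append, List.take_append_drop]
    rw [hsplit] at hglobal
    have hdisj := (List.nodup_append'.mp hglobal).2.2
    refine hdisj hmem ?_
    rw [List.mem_flatMap]
    refine ⟨L[m], ?_, fst_mem_pairVals _⟩
    have : L[m] :: L.drop (m+1) = L.drop m := List.getElem_cons_drop hm
    rw [← this]
    exact List.mem_cons_self
  · intro z hz
    rw [List.mem_flatMap] at hz
    obtain ⟨c, hc, hzc⟩ := hz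
    obtain ⟨k, hk, hck⟩ := List.mem_iff_getElem.mp hc
    have hk' : k < m := by
      have := hk
      rw [List.length_take] at this
      omega
    have hck' : L[k]'(by omega) = c := by
      rw [← hck]
      simp
    have hlt : (L[k]'(by omega)).2 < (L[m]).2 :=
      List.pairwise_iff_getElem.mp hsorted k m (by omega) hm hk'
    have hzc' : z ≤ c.2 := by
      rcases mem_pairVals hzc with rfl | rfl
      · exact hle c ((List.take_prefix m L).subset hc)
      · exact le_rfl
    rw [hck'] at hlt
    omega

lemma fold_invariant {L : List (ℕ × ℕ)} (hglobal : (L.flatMap pairVals).Nodup)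
    (hsorted : L.Pairwise (fun c c' => c.2 < c'.2))
    (hle : ∀ c ∈ L, c.1 ≤ c.2) :
    ∀ m, m ≤ L.length →
      RowsSorted ((L.take m).foldl (fun T c => cBS T c.1 c.2) []) ∧
      ((L.take m).foldl (fun T c => cBS T c.1 c.2) []).flatten.Perm
        ((L.take m).flatMap pairVals) := by
  intro m
  induction m with
  | zero =>
    intro _
    constructor
    · intro s hs
      simp at hs
    · simp
  | succ m ih =>
    intro hm1
    have hm : m < L.length := by omega
    obtain ⟨hs, hperm⟩ := ih (by omega)
    obtain ⟨ha', hb'⟩ := fold_pre hglobal hsorted hle hm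
    set T := (L.take m).foldl (fun T c => cBS T c.1 c.2) ([] : List (List ℕ)) with hT
    have hnd : T.flatten.Nodup := hperm.nodup_iff.mpr (flatMap_take_nodup hglobal m)
    have ha : (L[m]).1 ∉ T.flatten := fun h => ha' (hperm.subset h)
    have hb : ∀ z ∈ T.flatten, z < (L[m]).2 := fun z hz => hb' z (hperm.subset hz)
    have hab : (L[m]).1 ≤ (L[m]).2 := hle _ (List.getElem_mem hm)
    rw [fold_step L m hm]
    constructor
    · exact rowsSorted_cBS hs hnd ha hb hab
    · refine (flatten_cBS T (L[m]).1 (L[m]).2).trans ?_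
      rw [flatMap_take_succ L m hm]
      refine hperm.append ?_
      unfold pairVals
      rfl
/-- stability of the relative order of two entries in the row
reading words of the partial tableaux of an involution, when no intermediate
entry appears later. -/
theorem partial_tableaux_order (n : ℕ) (y : Equiv.Perm (Fin n)) (hy : y * y = 1)
    (i j p q : ℕ) :
    let pairs := invPairsFn (permFn y) n
    let Ti := (pairs.take i).foldl (fun T c => cBS T c.1 c.2) ([] : List (List ℕ))
    let Tj := (pairs.take j).foldl (fun T c => cBS T c.1 c.2) ([] : List (List ℕ))
    1 ≤ i → i < j → j ≤ pairs.length →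
    p < q → p ∈ Ti.flatten → q ∈ Ti.flatten →
    (∀ r ∈ Tj.flatten, ¬ (p < r ∧ r < q)) →
    ((rowWord Ti).idxOf p < (rowWord Ti).idxOf q ↔
     (rowWord Tj).idxOf p < (rowWord Tj).idxOf q) := by
  intro pairs Ti Tj _ hij hjlen hpq hpTi hqTi hbet
  have hglobal : (pairs.flatMap pairVals).Nodup := invPairs_vals_nodup y hy
  have hsorted : pairs.Pairwise (fun c c' => c.2 < c'.2) := invPairs_snd_sorted _ n
  have hle : ∀ c ∈ pairs, c.1 ≤ c.2 := fun _ hc => invPairs_le hc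
  have hinv := fold_invariant hglobal hsorted hle
  obtain ⟨hsI, hpermI⟩ := hinv i (by omega)
  obtain ⟨hsJ, hpermJ⟩ := hinv j hjlen
  have hndI : Ti.flatten.Nodup := hpermI.nodup_iff.mpr (flatMap_take_nodup hglobal i)
  have hndJ : Tj.flatten.Nodup := hpermJ.nodup_iff.mpr (flatMap_take_nodup hglobal j)
  have hpTj : p ∈ Tj.flatten :=
    hpermJ.mem_iff.mpr (flatMap_take_mono hij.le (hpermI.subset hpTi))
  have hqTj : q ∈ Tj.flatten :=
    hpermJ.mem_iff.mpr (flatMap_take_mono hij.le (hpermI.subset hqTi))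
  have key : ∀ m (_ : i ≤ m), m ≤ j →
      (rowIdx ((pairs.take m).foldl (fun T c => cBS T c.1 c.2) []) q ≤
       rowIdx ((pairs.take m).foldl (fun T c => cBS T c.1 c.2) []) p ↔
       rowIdx Ti q ≤ rowIdx Ti p) := by
    refine Nat.le_induction ?_ ?_
    · intro _
      exact Iff.rfl
    · intro m hm ih hm1j
      have hmlen : m < pairs.length := by omega
      obtain ⟨hsM, hpermM⟩ := hinv m (by omega)
      obtain ⟨ha', hb'⟩ := fold_pre hglobal hsorted hle hmlen
      set T := (pairs.take m).foldl (fun T c => cBS T c.1 c.2) ([] : List (List ℕ)) with hTm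
      have hndM : T.flatten.Nodup := hpermM.nodup_iff.mpr (flatMap_take_nodup hglobal m)
      have ha : (pairs[m]).1 ∉ T.flatten := fun h => ha' (hpermM.subset h)
      have hb : ∀ z ∈ T.flatten, z < (pairs[m]).2 := fun z hz => hb' z (hpermM.subset hz)
      have hpM : p ∈ T.flatten :=
        hpermM.mem_iff.mpr (flatMap_take_mono hm (hpermI.subset hpTi))
      have hqM : q ∈ T.flatten :=
        hpermM.mem_iff.mpr (flatMap_take_mono hm (hpermI.subset hqTi))
      have hbetM : ∀ z ∈ (pairs[m]).1 :: T.flatten, ¬ (p < z ∧ z < q) := by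
        intro z hz
        refine hbet z ?_
        rcases List.mem_cons.mp hz with rfl | hz'
        · refine hpermJ.mem_iff.mpr (flatMap_take_mono (show m+1 ≤ j by omega) ?_)
          rw [flatMap_take_succ pairs m hmlen]
          exact List.mem_append_right _ (fst_mem_pairVals _)
        · exact hpermJ.mem_iff.mpr
            (flatMap_take_mono (show m ≤ j by omega) (hpermM.subset hz'))
      rw [fold_step pairs m hmlen]
      exact (rowIdx_le_iff_cBS hsM hndM ha hb hpM hqM hpq hbetM).trans (ih (by omega))
  have hkey := key j hij.le le_rfl
  rw [indexOf_rowWord_lt_iff Ti hsI hndI hpTi hqTi hpq,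
      indexOf_rowWord_lt_iff Tj hsJ hndJ hpTj hqTj hpq]
  exact hkey.symm

end GelfandRSK
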